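/- Let X and Y be finite nonempty subsets of an abelian group, and let ε ∈ (0,1). Then there is a constant C = C(ε) and a subset X' ⊆ X with |X'| ≥ (1 - ε)|X| such that X' can be covered by at most C · |X + Y| / |Y| translates of Y. -/

import Mathlib

open Pointwise Finset

private lemma energy_eq_sum {G : Type} [AddCommGroup G] [DecidableEq G] (A B : Finset G) :
    Finset.addEnergy A B
      = ∑ p ∈ A ×ˢ B, (A ∩ B.image (fun y => p.1 - p.2 + y)).card := by
  have hdef : Finset.addEnergy A B
      = (((A ×ˢ A) ×ˢ B ×ˢ B).filter
          fun x : (G × G) × G × G => x.1.1 + x.2.1 = x.1.2 + x.2.2).card := rfl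
  rw [hdef, Finset.card_eq_sum_card_fiberwise
      (f := fun x : (G × G) × G × G => (x.1.2, x.2.1)) (t := A ×ˢ B)
      (by intro x hx; simp only [mem_coe, mem_filter, mem_product] at hx ⊢; tauto)]
  refine Finset.sum_congr rfl fun p hp => ?_
  simp only [mem_product] at hp
  refine Finset.card_bij' (i := fun x _ => x.1.1)
    (j := fun c _ => ((c, p.1), (p.2, c + p.2 - p.1))) ?_ ?_ ?_ ?_
  · rintro ⟨⟨a1, a2⟩, b1, b2⟩ hx
    simp only [mem_filter, mem_product, Prod.mk.injEq] at hx
    obtain ⟨⟨⟨⟨ha1, ha2⟩, hb1, hb2⟩, heq⟩, hfib⟩ := hx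
    have h1 : a2 = p.1 := by rw [← hfib]
    have h2 : b1 = p.2 := by rw [← hfib]
    subst h1; subst h2
    refine Finset.mem_inter.2 ⟨ha1, Finset.mem_image.2 ⟨b2, hb2, ?_⟩⟩
    show p.1 - p.2 + b2 = a1
    have : a1 = p.1 + b2 - p.2 := by
      rw [← heq]; abel
    rw [this]; abel
  · rintro c hc
    obtain ⟨hcA, hcI⟩ := Finset.mem_inter.1 hc
    obtain ⟨y, hy, hyc⟩ := Finset.mem_image.1 hcI
    have hb2 : c + p.2 - p.1 ∈ B := by
      have : c + p.2 - p.1 = y := by rw [← hyc]; abel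
      rw [this]; exact hy
    simp only [mem_filter, mem_product]
    refine ⟨⟨⟨⟨hcA, hp.1⟩, hp.2, hb2⟩, by abel⟩, ?_⟩
    simp
  · rintro ⟨⟨a1, a2⟩, b1, b2⟩ hx
    simp only [mem_filter, mem_product, Prod.mk.injEq] at hx
    obtain ⟨⟨⟨⟨ha1, ha2⟩, hb1, hb2⟩, heq⟩, hfib⟩ := hx
    have h1 : a2 = p.1 := by rw [← hfib]
    have h2 : b1 = p.2 := by rw [← hfib]
    subst h1; subst h2
    have hb : b2 = a1 + p.2 - p.1 := by rw [heq]; abel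
    subst hb
    rfl
  · intro c hc; rfl

/-- There is a translate of `B` capturing at least `|A||B|/|A+B|` elements of `A`. -/
private lemma exists_good_translate {G : Type} [AddCommGroup G] [DecidableEq G]
    {A B : Finset G} (hA : A.Nonempty) (hB : B.Nonempty) :
    ∃ t : G, A.card * B.card ≤ (A + B).card * (A ∩ B.image (fun y => t + y)).card := by
  obtain ⟨p, hp, hmax⟩ := Finset.exists_max_image (A ×ˢ B)
    (fun p => (A ∩ B.image (fun y => p.1 - p.2 + y)).card) (hA.product hB)
  refine ⟨p.1 - p.2, ?_⟩
  have h1 : A.card ^ 2 * B.card ^ 2 ≤ (A + B).card * Finset.addEnergy A B :=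
    Finset.le_card_add_mul_addEnergy A B
  have h2 : Finset.addEnergy A B
      ≤ (A.card * B.card) * (A ∩ B.image (fun y => p.1 - p.2 + y)).card := by
    rw [energy_eq_sum]
    calc ∑ q ∈ A ×ˢ B, (A ∩ B.image (fun y => q.1 - q.2 + y)).card
        ≤ (A ×ˢ B).card • (A ∩ B.image (fun y => p.1 - p.2 + y)).card :=
          Finset.sum_le_card_nsmul _ _ _ (fun q hq => hmax q hq)
      _ = (A.card * B.card) * (A ∩ B.image (fun y => p.1 - p.2 + y)).card := by
          rw [Finset.card_product, smul_eq_mul]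
  have hpos : 0 < A.card * B.card := Nat.mul_pos hA.card_pos hB.card_pos
  have h3 : (A.card * B.card) * (A.card * B.card)
      ≤ (A.card * B.card) * ((A + B).card * (A ∩ B.image (fun y => p.1 - p.2 + y)).card) := by
    calc (A.card * B.card) * (A.card * B.card) = A.card ^ 2 * B.card ^ 2 := by ring
      _ ≤ (A + B).card * Finset.addEnergy A B := h1
      _ ≤ (A + B).card * ((A.card * B.card) * (A ∩ B.image (fun y => p.1 - p.2 + y)).card) :=
          Nat.mul_le_mul_left _ h2
      _ = (A.card * B.card) * ((A + B).card * (A ∩ B.image (fun y => p.1 - p.2 + y)).card) := by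
          ring
  exact Nat.le_of_mul_le_mul_left h3 hpos

private lemma greedy_cover {G : Type} [AddCommGroup G] [DecidableEq G]
    (X Y : Finset G) (hY : Y.Nonempty) (ε : ℝ) (hε : 0 < ε) :
    ∀ A : Finset G, A ⊆ X →
      ∃ T : Finset G, ((A \ (T + Y)).card : ℝ) ≤ ε * X.card ∧
        (T.card : ℝ) * (ε * X.card * Y.card) ≤ (A.card : ℝ) * ((X + Y).card : ℝ) := by
  intro A
  induction A using Finset.strongInduction with
  | _ A ih =>
    intro hAX
    by_cases hsmall : (A.card : ℝ) ≤ ε * X.card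
    · refine ⟨∅, ?_, ?_⟩
      · simpa using hsmall
      · simp only [Finset.card_empty, Nat.cast_zero, zero_mul]
        positivity
    · push_neg at hsmall
      have hAne : A.Nonempty := by
        have hApos : (0 : ℝ) < (A.card : ℝ) := lt_of_le_of_lt (by positivity) hsmall
        have : 0 < A.card := by exact_mod_cast hApos
        exact Finset.card_pos.1 this
      obtain ⟨t, ht⟩ := exists_good_translate hAne hY
      set D : Finset G := Y.image (fun y => t + y) with hD
      have hgle : (A ∩ D).card ≤ A.card := Finset.card_le_card Finset.inter_subset_left
      have hg1 : 1 ≤ (A ∩ D).card := by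
        have hpos := Nat.mul_pos hAne.card_pos hY.card_pos
        rcases Nat.eq_zero_or_pos (A ∩ D).card with h | h
        · rw [h, Nat.mul_zero] at ht; omega
        · exact h
      -- the set after removing the translate
      set A' : Finset G := A \ D with hA'
      have hA'ss : A' ⊂ A := by
        obtain ⟨x, hx⟩ := Finset.card_pos.1 (lt_of_lt_of_le Nat.one_pos hg1)
        have hxA : x ∈ A := (Finset.mem_inter.1 hx).1
        have hxD : x ∈ D := (Finset.mem_inter.1 hx).2
        exact (Finset.ssubset_iff_of_subset (Finset.sdiff_subset)).2
          ⟨x, hxA, by simp [hA', hxD]⟩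
      obtain ⟨T', hT'1, hT'2⟩ := ih A' hA'ss (Finset.sdiff_subset.trans hAX)
      refine ⟨insert t T', ?_, ?_⟩
      · refine le_trans ?_ hT'1
        have hsub : A \ (insert t T' + Y) ⊆ A' \ (T' + Y) := by
          intro x hx
          obtain ⟨hxA, hxn⟩ := Finset.mem_sdiff.1 hx
          refine Finset.mem_sdiff.2 ⟨Finset.mem_sdiff.2 ⟨hxA, fun hxD => hxn ?_⟩,
            fun hxT => hxn ?_⟩
          · obtain ⟨y, hy, hyx⟩ := Finset.mem_image.1 hxD
            rw [← hyx]
            exact Finset.add_mem_add (Finset.mem_insert_self t T') hy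
          · exact Finset.add_subset_add_right (Finset.subset_insert t T') hxT
        exact_mod_cast Nat.cast_le.2 (Finset.card_le_card hsub)
      · -- cardinality bound
        have hcard : ((A ∩ D).card : ℝ) + (A'.card : ℝ) = (A.card : ℝ) := by
          have := Finset.card_inter_add_card_sdiff A D
          exact_mod_cast congrArg (Nat.cast (R := ℝ)) this
        have hS : ((A + Y).card : ℝ) ≤ ((X + Y).card : ℝ) := by
          exact_mod_cast Finset.card_le_card (Finset.add_subset_add_right hAX)
        have hkey : ε * X.card * Y.card ≤ ((X + Y).card : ℝ) * ((A ∩ D).card : ℝ) := by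
          have htR : (A.card : ℝ) * Y.card ≤ ((A + Y).card : ℝ) * ((A ∩ D).card : ℝ) := by
            exact_mod_cast ht
          have h0 : ε * X.card * Y.card ≤ (A.card : ℝ) * Y.card :=
            mul_le_mul_of_nonneg_right hsmall.le (Nat.cast_nonneg _)
          refine h0.trans (htR.trans ?_)
          exact mul_le_mul_of_nonneg_right hS (Nat.cast_nonneg _)
        have hTins : ((insert t T').card : ℝ) ≤ (T'.card : ℝ) + 1 := by
          exact_mod_cast Finset.card_insert_le t T'
        have hεXY : (0 : ℝ) ≤ ε * X.card * Y.card := by positivity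
        calc ((insert t T').card : ℝ) * (ε * X.card * Y.card)
            ≤ ((T'.card : ℝ) + 1) * (ε * X.card * Y.card) :=
              mul_le_mul_of_nonneg_right hTins hεXY
          _ = (T'.card : ℝ) * (ε * X.card * Y.card) + ε * X.card * Y.card := by ring
          _ ≤ (A'.card : ℝ) * ((X + Y).card : ℝ)
              + ((X + Y).card : ℝ) * ((A ∩ D).card : ℝ) := add_le_add hT'2 hkey
          _ = ((A ∩ D).card + (A'.card : ℝ)) * ((X + Y).card : ℝ) := by ring
          _ = (A.card : ℝ) * ((X + Y).card : ℝ) := by rw [hcard]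

theorem ruzsa_covering_large_subset (ε : ℝ) (hε0 : 0 < ε) (hε1 : ε < 1) :
    ∃ C : ℝ, 0 < C ∧
      ∀ (G : Type) [AddCommGroup G] [DecidableEq G] (X Y : Finset G),
        X.Nonempty → Y.Nonempty →
        ∃ X' ⊆ X, (1 - ε) * (X.card : ℝ) ≤ (X'.card : ℝ) ∧
          ∃ T : Finset G, X' ⊆ T + Y ∧
            (T.card : ℝ) * (Y.card : ℝ) ≤ C * ((X + Y).card : ℝ) := by
  refine ⟨ε⁻¹, by positivity, ?_⟩
  intro G _ _ X Y hX hY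
  obtain ⟨T, hT1, hT2⟩ := greedy_cover X Y hY ε hε0 X Finset.Subset.rfl
  refine ⟨X ∩ (T + Y), Finset.inter_subset_left, ?_, T, Finset.inter_subset_right, ?_⟩
  · have hcard : ((X ∩ (T + Y)).card : ℝ) + ((X \ (T + Y)).card : ℝ) = (X.card : ℝ) := by
      exact_mod_cast congrArg (Nat.cast (R := ℝ)) (Finset.card_inter_add_card_sdiff X (T + Y))
    nlinarith [hT1, hcard]
  · have hXpos : (0 : ℝ) < X.card := by exact_mod_cast hX.card_pos
    have hmul : (0 : ℝ) < ε * X.card := by positivity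
    rw [← mul_le_mul_iff_of_pos_right hmul]
    calc (T.card : ℝ) * (Y.card : ℝ) * (ε * X.card)
        = (T.card : ℝ) * (ε * X.card * Y.card) := by ring
      _ ≤ (X.card : ℝ) * ((X + Y).card : ℝ) := hT2
      _ = ε⁻¹ * ((X + Y).card : ℝ) * (ε * X.card) := by
          field_simp
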